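/- First modularity theorem: for each k ∈ {0,1,2,3}, if N ≥ 1 and p, q are natural numbers with 2^(N−1) ≤ p < 2^N ≤ q, then ω_k(p, q) = ω_k(p, 2^N + (q mod 2^N)). -/

import Mathlib

/-- The five states of the Cayley–Dickson twist tree:
corner (C), top (T), left (L), diagonal (D) and interior (I). -/
inductive TwistState : Type
  | C | T | L | D | I
deriving DecidableEq

open TwistState

/-- The interior-node sign `i_k(a,b)` for the doubling product `P_k`, `k ∈ {0,1,2,3}`. -/
def iTwist (k : ℕ) (a b : Bool) : ℤ :=
  match k with
  | 0 => if a = false ∧ b = false then -1 else 1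
  | 1 => -1
  | 2 => 1
  | _ => if a = false ∧ b = false then 1 else -1

/-- One step of the twist-tree finite-state computation: from the current
(state, sign) pair, read a doublet of bits `(a, b)` and move to the new
(state, sign) pair. -/
def twistStep (k : ℕ) : TwistState × ℤ → Bool × Bool → TwistState × ℤ
  | (C, s), (false, false) => (C, s)
  | (C, s), (false, true)  => (T, s)
  | (C, s), (true, false)  => (L, s)
  | (C, s), (true, true)   => (D, -s)
  | (T, s), (false, false) => (T, s)
  | (T, s), (false, true)  => (T, s)
  | (T, s), (true, false)  => (I, s)
  | (T, s), (true, true)   => (I, -s)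
  | (L, s), (false, false) => (L, s)
  | (L, s), (false, true)  => (I, -s)
  | (L, s), (true, false)  => (L, s)
  | (L, s), (true, true)   => (I, s)
  | (D, s), (false, false) => (D, s)
  | (D, s), (false, true)  => (I, -s)
  | (D, s), (true, false)  => (I, s)
  | (D, s), (true, true)   => (D, s)
  | (I, s), (a, b)         => (I, s * iTwist k a b)

/-- The Cayley–Dickson twist `ω_k(p,q)` for the doubling product `P_k`:
write `p` and `q` in binary with a common number of bits (padding with
leading zeros), read the doublets of bits from most significant to least
significant, running the twist-tree automaton starting at state `C` with
sign `+1`; the result is the final sign. -/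
def omegaTwist (k : ℕ) (p q : ℕ) : ℤ :=
  (((List.range (max (Nat.size p) (Nat.size q))).reverse.map
      (fun i => (p.testBit i, q.testBit i))).foldl (twistStep k) (C, 1)).2

lemma twistStep_T_false (k : ℕ) (s : ℤ) (b : Bool) :
    twistStep k (T, s) (false, b) = (T, s) := by cases b <;> rfl

lemma foldl_T_of_fst_false (k : ℕ) (s : ℤ) (l : List (Bool × Bool))
    (h : ∀ x ∈ l, x.1 = false) :
    l.foldl (twistStep k) (T, s) = (T, s) := by
  induction l with
  | nil => rfl
  | cons a tl ih =>
    obtain ⟨a1, a2⟩ := a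
    have h1 : a1 = false := h _ List.mem_cons_self
    subst h1
    rw [List.foldl_cons, twistStep_T_false]
    exact ih fun x hx => h x (List.mem_cons_of_mem _ hx)

lemma testBit_of_between {n i : ℕ} (h1 : 2 ^ i ≤ n) (h2 : n < 2 ^ (i + 1)) :
    n.testBit i = true := by
  have hd : n / 2 ^ i = 1 := by
    apply Nat.div_eq_of_lt_le
    · simpa using h1
    · rw [pow_succ] at h2; linarith
  rw [Nat.testBit_eq_decide_div_mod_eq, hd]
  rfl

/-- First modularity theorem: for each `k ∈ {0,1,2,3}`, if `N ≥ 1` and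
`2^(N-1) ≤ p < 2^N ≤ q`, then `ω_k(p, q) = ω_k(p, 2^N + (q mod 2^N))`. -/
theorem omegaTwist_first_modularity :
    ∀ k ∈ ({0, 1, 2, 3} : Finset ℕ), ∀ N p q : ℕ, 1 ≤ N →
      2 ^ (N - 1) ≤ p → p < 2 ^ N → 2 ^ N ≤ q →
      omegaTwist k p q = omegaTwist k p (2 ^ N + q % 2 ^ N) := by
  intro k _ N p q _ _ hp2 hq
  set r := q % 2 ^ N with hr_def
  have hr : r < 2 ^ N := Nat.mod_lt _ (by positivity)
  set M := Nat.size q with hM_def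
  have hNM : N < M := Nat.lt_size.2 hq
  have hsp : Nat.size p ≤ N := Nat.size_le.2 hp2
  have hmax1 : max (Nat.size p) (Nat.size q) = M :=
    max_eq_right (hsp.trans hNM.le)
  have hq'lt : 2 ^ N + r < 2 ^ (N + 1) := by rw [pow_succ]; linarith
  have hq'ge : 2 ^ N ≤ 2 ^ N + r := Nat.le_add_right _ _
  have hsq' : Nat.size (2 ^ N + r) = N + 1 :=
    le_antisymm (Nat.size_le.2 hq'lt) (Nat.lt_size.2 hq'ge)
  have hmax2 : max (Nat.size p) (Nat.size (2 ^ N + r)) = N + 1 := by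
    rw [hsq']; exact max_eq_right (hsp.trans (Nat.le_succ _))
  have hpfalse : ∀ i, N ≤ i → p.testBit i = false := fun i hi =>
    Nat.testBit_lt_two_pow (lt_of_lt_of_le hp2 (Nat.pow_le_pow_right (by norm_num) hi))
  -- low parts agree
  have hlow : (List.range N).reverse.map (fun i => (p.testBit i, q.testBit i)) =
      (List.range N).reverse.map (fun i => (p.testBit i, (2 ^ N + r).testBit i)) := by
    apply List.map_congr_left
    intro i hi
    have hiN : i < N := List.mem_range.1 (List.mem_reverse.1 hi)
    have hq' : (2 ^ N + r).testBit i = q.testBit i := by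
      rw [Nat.testBit_two_pow_add_gt hiN, hr_def, Nat.testBit_mod_two_pow]
      simp [hiN]
    simp [hq']
  -- decomposition of range M
  set t := M - N - 1 with ht_def
  have hMt : M = N + (t + 1) := by omega
  have hconcat : List.range' N (t + 1) = List.range' N t ++ [N + t] := by
    simpa using (List.range'_concat : List.range' N (t + 1) 1 = _)
  have happ : List.range' 0 N ++ List.range' N (t + 1) = List.range' 0 (N + (t + 1)) := by
    simpa [Nat.add_comm] using (List.range'_append : List.range' 0 N 1 ++ List.range' (0 + 1 * N) (t + 1) 1 = _)
  have hsplit : List.range M = List.range N ++ (List.range' N t ++ [N + t]) := by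
    rw [List.range_eq_range', hMt, ← happ, hconcat, List.range_eq_range']
  have hNt : N + t = M - 1 := by omega
  have hqtop : q.testBit (N + t) = true := by
    rw [hNt]
    apply testBit_of_between
    · exact Nat.lt_size.1 (by omega)
    · have h1 : M - 1 + 1 = M := by omega
      rw [h1]; exact Nat.lt_size_self q
  have hptop : p.testBit (N + t) = false := hpfalse _ (Nat.le_add_right _ _)
  have hpN : p.testBit N = false := hpfalse N le_rfl
  have hq'N : (2 ^ N + r).testBit N = true := testBit_of_between hq'ge hq'lt
  -- middle part consists of (false, b) doublets
  have hmid : ∀ x ∈ (List.range' N t).reverse.map (fun i => (p.testBit i, q.testBit i)),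
      x.1 = false := by
    intro x hx
    obtain ⟨i, hi, rfl⟩ := List.mem_map.1 hx
    exact hpfalse i (List.mem_range'_1.1 (List.mem_reverse.1 hi)).1
  -- compute both sides
  unfold omegaTwist
  rw [hmax1, hmax2, hsplit, List.range_succ]
  simp only [List.reverse_append, List.map_append, List.foldl_append,
    List.reverse_cons, List.reverse_singleton, List.reverse_nil, List.map_cons,
    List.map_nil, List.foldl_cons, List.foldl_nil, List.nil_append]
  rw [hptop, hqtop, hpN, hq'N]
  have hstep : twistStep k (C, 1) (false, true) = (T, 1) := rfl
  rw [hstep, foldl_T_of_fst_false k 1 _ hmid, ← hlow]
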